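/- arXiv:0807.3580 — 2 statements merged into one kernel-verified Lean document; each statement's English description precedes it below -/
import Mathlib

section
/- The pattern I = {(1,2),(2,1),(1,3),(3,1),(2,3),(3,2)} ⊆ {1,…,4}×{1,…,4} is not 4-universal. In fact, the traceless nilpotent 4×4 matrix A = E_{12} + E_{34} (with entry 1 in positions (1,2) and (3,4) and 0 elsewhere) is not unitarily similar to any 4×4 matrix X with x_{ij} = 0 for all (i,j) ∈ I. -/
/-- A pattern `I` (finite set of 1-based positions) is `n`-universal if every traceless
complex `n × n` matrix is unitarily similar to a matrix vanishing on all positions of `I`. -/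
def IsUniversal (n : ℕ) (I : Finset (ℕ × ℕ)) : Prop :=
  ∀ A : Matrix (Fin n) (Fin n) ℂ, A.trace = 0 →
    ∃ U ∈ Matrix.unitaryGroup (Fin n) ℂ,
      ∀ i j : Fin n, ((i : ℕ) + 1, (j : ℕ) + 1) ∈ I → (U * A * star U) i j = 0

/-- The matrix `A = E_{12} + E_{34}` (1-based positions). -/
noncomputable def A17 : Matrix (Fin 4) (Fin 4) ℂ :=
  Matrix.single 0 1 1 + Matrix.single 2 3 1

/-- Key invariant computation: if `X` is an outer product `v ⊗ w` then
`tr((XX*)²) = (tr(XX*))²`, contradicting `tr(XX*) = 2`, `tr((XX*)²) = 2`. -/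
lemma rank1_contra (X : Matrix (Fin 4) (Fin 4) ℂ) (v w : Fin 4 → ℂ)
    (hvw : ∀ i j, X i j = v i * w j)
    (h1 : (X * star X).trace = 2)
    (h2 : (X * star X * X * star X).trace = 2) : False := by
  set W : ℂ := w 0 * star (w 0) + w 1 * star (w 1) + w 2 * star (w 2) + w 3 * star (w 3) with hW
  have hM : ∀ i k : Fin 4, (X * star X) i k = W * (v i * star (v k)) := by
    intro i k
    simp only [Matrix.mul_apply, Matrix.star_apply, Fin.sum_univ_four, hvw, star_mul', hW]
    ring
  have h2' : ((X * star X) * (X * star X)).trace = 2 := by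
    rw [← h2]; simp only [Matrix.mul_assoc]
  rw [Matrix.trace] at h1 h2'
  simp only [Matrix.diag, Matrix.mul_apply, Fin.sum_univ_four, hM] at h1 h2'
  have : (4:ℂ) = 2 := by
    linear_combination h2' - (W * (v 0 * star (v 0) + v 1 * star (v 1) + v 2 * star (v 2) +
      v 3 * star (v 3)) + 2) * h1
  norm_num at this

lemma key_not_similar :
    ¬ ∃ U ∈ Matrix.unitaryGroup (Fin 4) ℂ,
        ∀ i j : Fin 4,
          ((i : ℕ) + 1, (j : ℕ) + 1) ∈
              ({(1, 2), (2, 1), (1, 3), (3, 1), (2, 3), (3, 2)} : Finset (ℕ × ℕ)) →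
            (U * A17 * star U) i j = 0 := by
  rintro ⟨U, hU, h⟩
  have hsU : star U * U = 1 := hU.1
  set X := U * A17 * star U with hX
  have z01 : X 0 1 = 0 := h 0 1 (by decide)
  have z02 : X 0 2 = 0 := h 0 2 (by decide)
  have z10 : X 1 0 = 0 := h 1 0 (by decide)
  have z12 : X 1 2 = 0 := h 1 2 (by decide)
  have z20 : X 2 0 = 0 := h 2 0 (by decide)
  have z21 : X 2 1 = 0 := h 2 1 (by decide)
  have hkey : ∀ B C : Matrix (Fin 4) (Fin 4) ℂ,
      (U * B * star U) * (U * C * star U) = U * (B * C) * star U := by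
    intro B C
    simp only [Matrix.mul_assoc]
    rw [← Matrix.mul_assoc (star U) U, hsU, Matrix.one_mul]
  have htrc : ∀ B : Matrix (Fin 4) (Fin 4) ℂ, (U * B * star U).trace = B.trace := by
    intro B
    rw [Matrix.trace_mul_cycle, hsU, Matrix.one_mul]
  have hA2 : A17 * A17 = 0 := by
    ext i j
    fin_cases i <;> fin_cases j <;>
      simp [A17, Matrix.mul_apply, Fin.sum_univ_four, Matrix.single]
  have hXs : star X = U * star A17 * star U := by
    rw [hX]; simp [star_mul, Matrix.mul_assoc]
  have hsq : X * X = 0 := by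
    rw [hX, hkey, hA2, Matrix.mul_zero, Matrix.zero_mul]
  have e : ∀ i j : Fin 4, X i 0 * X 0 j + X i 1 * X 1 j + X i 2 * X 2 j + X i 3 * X 3 j = 0 := by
    intro i j
    have := congrFun (congrFun hsq i) j
    simpa [Matrix.mul_apply, Fin.sum_univ_four] using this
  have htr : X 0 0 + X 1 1 + X 2 2 + X 3 3 = 0 := by
    have : X.trace = 0 := by rw [hX, htrc]; simp [A17, Matrix.trace, Fin.sum_univ_four,
      Matrix.single]
    simpa [Matrix.trace, Fin.sum_univ_four] using this
  have e00 := e 0 0; have e01 := e 0 1; have e02 := e 0 2; have e03 := e 0 3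
  have e10 := e 1 0; have e11 := e 1 1; have e12 := e 1 2; have e13 := e 1 3
  have e20 := e 2 0; have e21 := e 2 1; have e22 := e 2 2; have e23 := e 2 3
  have e30 := e 3 0; have e31 := e 3 1; have e32 := e 3 2; have e33 := e 3 3
  simp only [z01, z02, z10, z12, z20, z21, mul_zero, zero_mul, add_zero, zero_add]
    at e00 e01 e02 e03 e10 e11 e12 e13 e20 e21 e22 e23 e30 e31 e32 e33
  set a := X 0 0 with hXa
  set p := X 0 3 with hXp
  set b := X 1 1 with hXb
  set q := X 1 3 with hXq
  set c := X 2 2 with hXc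
  set r := X 2 3 with hXr
  set s := X 3 0 with hXs'
  set t := X 3 1 with hXt
  set u := X 3 2 with hXu
  set d := X 3 3 with hXd
  -- Produce a rank-one (outer product) decomposition of X
  have hout : ∃ v w : Fin 4 → ℂ, ∀ i j, X i j = v i * w j := by
    by_cases hp : p = 0 <;> by_cases hq : q = 0 <;> by_cases hr : r = 0
    · -- p = q = r = 0
      have ha : a = 0 := mul_self_eq_zero.mp (by linear_combination e00 - s * hp)
      have hb : b = 0 := mul_self_eq_zero.mp (by linear_combination e11 - t * hq)
      have hc : c = 0 := mul_self_eq_zero.mp (by linear_combination e22 - u * hr)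
      have hd : d = 0 := mul_self_eq_zero.mp
        (by linear_combination e33 - s * hp - t * hq - u * hr)
      exact ⟨![0,0,0,1], ![s,t,u,0], by
        intro i j; fin_cases i <;> fin_cases j <;>
          simp [ha, hb, hc, hd, hp, hq, hr, z01, z02, z10, z12, z20, z21, ← hXa, ← hXb, ← hXc,
            ← hXd, ← hXp, ← hXq, ← hXr, ← hXs', ← hXt, ← hXu]⟩
    · -- p = q = 0, r ≠ 0
      have hs : s = 0 := (mul_eq_zero.mp e20).resolve_left hr
      have ht : t = 0 := (mul_eq_zero.mp e21).resolve_left hr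
      have ha : a = 0 := mul_self_eq_zero.mp (by linear_combination e00 - s * hp)
      have hb : b = 0 := mul_self_eq_zero.mp (by linear_combination e11 - t * hq)
      have hd : d = -c := by linear_combination htr - ha - hb
      by_cases hc : c = 0
      · have hu : u = 0 :=
          (mul_eq_zero.mp (show r * u = 0 by linear_combination e22 - c * hc)).resolve_left hr
        have hd0 : d = 0 := by rw [hd, hc, neg_zero]
        exact ⟨![0,0,r,0], ![0,0,0,1], by
          intro i j; fin_cases i <;> fin_cases j <;>
            simp [ha, hb, hc, hd0, hs, ht, hu, hp, hq, z01, z02, z10, z12, z20, z21, ← hXa,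
              ← hXb, ← hXc, ← hXd, ← hXp, ← hXq, ← hXr, ← hXs', ← hXt, ← hXu]⟩
      · refine ⟨![0,0,1,u * c⁻¹], ![0,0,c,r], ?_⟩
        intro i j
        fin_cases i <;> fin_cases j <;>
          simp [ha, hb, hs, ht, hp, hq, z01, z02, z10, z12, z20, z21, ← hXa, ← hXb,
            ← hXc, ← hXd, ← hXp, ← hXq, ← hXr, ← hXs', ← hXt, ← hXu]
        · field_simp
        · field_simp
          linear_combination c * hd - e22
    · -- p = r = 0, q ≠ 0
      have hs : s = 0 := (mul_eq_zero.mp e10).resolve_left hq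
      have hu : u = 0 := (mul_eq_zero.mp e12).resolve_left hq
      have ha : a = 0 := mul_self_eq_zero.mp (by linear_combination e00 - s * hp)
      have hc : c = 0 := mul_self_eq_zero.mp (by linear_combination e22 - u * hr)
      have hd : d = -b := by linear_combination htr - ha - hc
      by_cases hb : b = 0
      · have ht : t = 0 :=
          (mul_eq_zero.mp (show q * t = 0 by linear_combination e11 - b * hb)).resolve_left hq
        have hd0 : d = 0 := by rw [hd, hb, neg_zero]
        exact ⟨![0,q,0,0], ![0,0,0,1], by
          intro i j; fin_cases i <;> fin_cases j <;>
            simp [ha, hb, hc, hd0, hs, ht, hu, hp, hr, z01, z02, z10, z12, z20, z21, ← hXa,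
              ← hXb, ← hXc, ← hXd, ← hXp, ← hXq, ← hXr, ← hXs', ← hXt, ← hXu]⟩
      · refine ⟨![0,1,0,t * b⁻¹], ![0,b,0,q], ?_⟩
        intro i j
        fin_cases i <;> fin_cases j <;>
          simp [ha, hc, hs, hu, hp, hr, z01, z02, z10, z12, z20, z21, ← hXa, ← hXb,
            ← hXc, ← hXd, ← hXp, ← hXq, ← hXr, ← hXs', ← hXt, ← hXu]
        · field_simp
        · field_simp
          linear_combination b * hd - e11
    · -- p = 0, q ≠ 0, r ≠ 0
      have hs : s = 0 := (mul_eq_zero.mp e10).resolve_left hq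
      have hu : u = 0 := (mul_eq_zero.mp e12).resolve_left hq
      have ht : t = 0 := (mul_eq_zero.mp e21).resolve_left hr
      have ha : a = 0 := mul_self_eq_zero.mp (by linear_combination e00 - s * hp)
      have hb : b = 0 := mul_self_eq_zero.mp (by linear_combination e11 - q * ht)
      have hc : c = 0 := mul_self_eq_zero.mp (by linear_combination e22 - r * hu)
      have hd : d = 0 := mul_self_eq_zero.mp
        (by linear_combination e33 - s * hp - q * ht - r * hu)
      exact ⟨![p,q,r,0], ![0,0,0,1], by
        intro i j; fin_cases i <;> fin_cases j <;>
          simp [ha, hb, hc, hd, hs, ht, hu, z01, z02, z10, z12, z20, z21, ← hXa, ← hXb,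
            ← hXc, ← hXd, ← hXp, ← hXq, ← hXr, ← hXs', ← hXt, ← hXu]⟩
    · -- p ≠ 0, q = r = 0
      have ht : t = 0 := (mul_eq_zero.mp e01).resolve_left hp
      have hu : u = 0 := (mul_eq_zero.mp e02).resolve_left hp
      have hb : b = 0 := mul_self_eq_zero.mp (by linear_combination e11 - t * hq)
      have hc : c = 0 := mul_self_eq_zero.mp (by linear_combination e22 - u * hr)
      have hd : d = -a := by linear_combination htr - hb - hc
      by_cases ha : a = 0
      · have hs : s = 0 :=
          (mul_eq_zero.mp (show p * s = 0 by linear_combination e00 - a * ha)).resolve_left hp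
        have hd0 : d = 0 := by rw [hd, ha, neg_zero]
        exact ⟨![p,0,0,0], ![0,0,0,1], by
          intro i j; fin_cases i <;> fin_cases j <;>
            simp [ha, hb, hc, hd0, hs, ht, hu, hq, hr, z01, z02, z10, z12, z20, z21, ← hXa,
              ← hXb, ← hXc, ← hXd, ← hXp, ← hXq, ← hXr, ← hXs', ← hXt, ← hXu]⟩
      · refine ⟨![1,0,0,s * a⁻¹], ![a,0,0,p], ?_⟩
        intro i j
        fin_cases i <;> fin_cases j <;>
          simp [hb, hc, ht, hu, hq, hr, z01, z02, z10, z12, z20, z21, ← hXa, ← hXb,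
            ← hXc, ← hXd, ← hXp, ← hXq, ← hXr, ← hXs', ← hXt, ← hXu]
        · field_simp
        · field_simp
          linear_combination a * hd - e00
    · -- p ≠ 0, q = 0, r ≠ 0
      have ht : t = 0 := (mul_eq_zero.mp e01).resolve_left hp
      have hu : u = 0 := (mul_eq_zero.mp e02).resolve_left hp
      have hs : s = 0 := (mul_eq_zero.mp e20).resolve_left hr
      have ha : a = 0 := mul_self_eq_zero.mp (by linear_combination e00 - p * hs)
      have hb : b = 0 := mul_self_eq_zero.mp (by linear_combination e11 - t * hq)
      have hc : c = 0 := mul_self_eq_zero.mp (by linear_combination e22 - r * hu)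
      have hd : d = 0 := mul_self_eq_zero.mp
        (by linear_combination e33 - p * hs - t * hq - r * hu)
      exact ⟨![p,q,r,0], ![0,0,0,1], by
        intro i j; fin_cases i <;> fin_cases j <;>
          simp [ha, hb, hc, hd, hs, ht, hu, z01, z02, z10, z12, z20, z21, ← hXa, ← hXb,
            ← hXc, ← hXd, ← hXp, ← hXq, ← hXr, ← hXs', ← hXt, ← hXu]⟩
    · -- p ≠ 0, q ≠ 0, r = 0
      have ht : t = 0 := (mul_eq_zero.mp e01).resolve_left hp
      have hu : u = 0 := (mul_eq_zero.mp e02).resolve_left hp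
      have hs : s = 0 := (mul_eq_zero.mp e10).resolve_left hq
      have ha : a = 0 := mul_self_eq_zero.mp (by linear_combination e00 - p * hs)
      have hb : b = 0 := mul_self_eq_zero.mp (by linear_combination e11 - q * ht)
      have hc : c = 0 := mul_self_eq_zero.mp (by linear_combination e22 - u * hr)
      have hd : d = 0 := mul_self_eq_zero.mp
        (by linear_combination e33 - p * hs - q * ht - u * hr)
      exact ⟨![p,q,r,0], ![0,0,0,1], by
        intro i j; fin_cases i <;> fin_cases j <;>
          simp [ha, hb, hc, hd, hs, ht, hu, z01, z02, z10, z12, z20, z21, ← hXa, ← hXb,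
            ← hXc, ← hXd, ← hXp, ← hXq, ← hXr, ← hXs', ← hXt, ← hXu]⟩
    · -- p ≠ 0, q ≠ 0, r ≠ 0
      have ht : t = 0 := (mul_eq_zero.mp e01).resolve_left hp
      have hu : u = 0 := (mul_eq_zero.mp e02).resolve_left hp
      have hs : s = 0 := (mul_eq_zero.mp e10).resolve_left hq
      have ha : a = 0 := mul_self_eq_zero.mp (by linear_combination e00 - p * hs)
      have hb : b = 0 := mul_self_eq_zero.mp (by linear_combination e11 - q * ht)
      have hc : c = 0 := mul_self_eq_zero.mp (by linear_combination e22 - r * hu)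
      have hd : d = 0 := mul_self_eq_zero.mp
        (by linear_combination e33 - p * hs - q * ht - r * hu)
      exact ⟨![p,q,r,0], ![0,0,0,1], by
        intro i j; fin_cases i <;> fin_cases j <;>
          simp [ha, hb, hc, hd, hs, ht, hu, z01, z02, z10, z12, z20, z21, ← hXa, ← hXb,
            ← hXc, ← hXd, ← hXp, ← hXq, ← hXr, ← hXs', ← hXt, ← hXu]⟩
  obtain ⟨v, w, hvw⟩ := hout
  have hXXs : X * star X = U * (A17 * star A17) * star U := by
    rw [hX, hXs, hkey]
  have h1 : (X * star X).trace = 2 := by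
    rw [hXXs, htrc]
    simp [A17, Matrix.trace, Matrix.diag, Matrix.mul_apply, Fin.sum_univ_four,
      Matrix.single, Matrix.star_apply]
    norm_num
  have h2 : (X * star X * X * star X).trace = 2 := by
    rw [Matrix.mul_assoc (X * star X) X (star X), hXXs, hkey, htrc]
    simp [A17, Matrix.trace, Matrix.diag, Matrix.mul_apply, Fin.sum_univ_four,
      Matrix.single, Matrix.star_apply]
    norm_num
  exact rank1_contra X v w hvw h1 h2

/-- The pattern `{(1,2),(2,1),(1,3),(3,1),(2,3),(3,2)}` is not 4-universal; in fact
`A = E_{12} + E_{34}` is not unitarily similar to any matrix vanishing on it. -/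
theorem first_exceptional_not_universal :
    ¬ IsUniversal 4 ({(1, 2), (2, 1), (1, 3), (3, 1), (2, 3), (3, 2)} : Finset (ℕ × ℕ)) ∧
    ¬ ∃ U ∈ Matrix.unitaryGroup (Fin 4) ℂ,
        ∀ i j : Fin 4,
          ((i : ℕ) + 1, (j : ℕ) + 1) ∈
              ({(1, 2), (2, 1), (1, 3), (3, 1), (2, 3), (3, 2)} : Finset (ℕ × ℕ)) →
            (U * A17 * star U) i j = 0 := by
  refine ⟨?_, key_not_similar⟩
  intro hIU
  have htrA : A17.trace = 0 := by
    simp [A17, Matrix.trace, Fin.sum_univ_four, Matrix.single]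
  exact key_not_similar (hIU A17 htrA)
end

section
/- Let I ∈ P'_n and let A ∈ L(n) be I-generic, i.e., for every B ∈ X_A = O_A ∩ L_I(n), the real vector space sum of L_I(n) and {XB − BX : X an n×n skew-hermitian matrix} equals L(n). Let U_A = {g ∈ U(n) : g⁻¹ A g ∈ L_I(n)}. Then the map sending the right coset g·T_n to the T_n-conjugation orbit of g⁻¹ A g is a well-defined bijection from U_A/T_n onto X_A/T_n. In particular, if g_1, g_2 ∈ U(n) satisfy g_1⁻¹ A g_1 ∈ L_I(n), g_2⁻¹ A g_2 ∈ L_I(n) and g_1⁻¹ A g_1 = t⁻¹ (g_2⁻¹ A g_2) t for some t ∈ T_n, then g_1⁻¹ g_2 t ∈ T_n. -/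
/-- Membership in `L_I(n)` (only the vanishing conditions; positions are 1-based). -/
def VanishesOn (n : ℕ) (I : Finset (ℕ × ℕ)) (B : Matrix (Fin n) (Fin n) ℂ) : Prop :=
  ∀ i j : Fin n, ((i : ℕ) + 1, (j : ℕ) + 1) ∈ I → B i j = 0

/-- Membership in the maximal torus `T_n` of diagonal unitary matrices. -/
def IsDiagUnitary (n : ℕ) (t : Matrix (Fin n) (Fin n) ℂ) : Prop :=
  t ∈ Matrix.unitaryGroup (Fin n) ℂ ∧ t.IsDiag

namespace RFAux

open Module

variable {n : ℕ} {I : Finset (ℕ × ℕ)}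

/-- The submodule of skew-hermitian matrices. -/
noncomputable def skewSub (n : ℕ) : Submodule ℝ (Matrix (Fin n) (Fin n) ℂ) where
  carrier := {X | X.conjTranspose = -X}
  add_mem' := by
    intro a b ha hb
    simp only [Set.mem_setOf_eq] at *
    rw [Matrix.conjTranspose_add, ha, hb, neg_add]
  zero_mem' := by simp
  smul_mem' := by
    intro r X hX
    simp only [Set.mem_setOf_eq] at *
    rw [Matrix.conjTranspose_smul, star_trivial, hX, smul_neg]

/-- The submodule of hermitian matrices. -/
noncomputable def hermSub (n : ℕ) : Submodule ℝ (Matrix (Fin n) (Fin n) ℂ) where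
  carrier := {X | X.conjTranspose = X}
  add_mem' := by
    intro a b ha hb
    simp only [Set.mem_setOf_eq] at *
    rw [Matrix.conjTranspose_add, ha, hb]
  zero_mem' := by simp
  smul_mem' := by
    intro r X hX
    simp only [Set.mem_setOf_eq] at *
    rw [Matrix.conjTranspose_smul, star_trivial, hX]

lemma mem_skewSub {X : Matrix (Fin n) (Fin n) ℂ} :
    X ∈ skewSub n ↔ X.conjTranspose = -X := Iff.rfl

/-- Multiplication by `i` as an `ℝ`-linear automorphism. -/
noncomputable def mulI (n : ℕ) : Matrix (Fin n) (Fin n) ℂ ≃ₗ[ℝ] Matrix (Fin n) (Fin n) ℂ :=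
  (LinearEquiv.smulOfNeZero ℂ _ Complex.I Complex.I_ne_zero).restrictScalars ℝ

lemma mulI_apply (X : Matrix (Fin n) (Fin n) ℂ) : mulI n X = Complex.I • X := rfl

lemma map_mulI_skew (n : ℕ) :
    Submodule.map (mulI n).toLinearMap (skewSub n) = hermSub n := by
  apply le_antisymm
  · rintro Y ⟨X, hX, rfl⟩
    show (Complex.I • X).conjTranspose = Complex.I • X
    rw [Matrix.conjTranspose_smul, hX, Complex.star_def, Complex.conj_I, neg_smul, smul_neg,
      neg_neg]
  · intro Y hY
    refine ⟨(-Complex.I) • Y, ?_, ?_⟩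
    · show ((-Complex.I) • Y).conjTranspose = -((-Complex.I) • Y)
      rw [Matrix.conjTranspose_smul, hY]
      simp
    · show Complex.I • ((-Complex.I) • Y) = Y
      rw [smul_smul]
      norm_num [Complex.I_mul_I]

lemma skew_sup_herm (n : ℕ) : skewSub n ⊔ hermSub n = ⊤ := by
  rw [eq_top_iff]
  intro X _
  have hX : X = (2⁻¹ : ℝ) • (X - X.conjTranspose) + (2⁻¹ : ℝ) • (X + X.conjTranspose) := by
    module
  rw [hX]
  refine Submodule.add_mem _ (Submodule.mem_sup_left ?_) (Submodule.mem_sup_right ?_)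
  · exact Submodule.smul_mem _ _ (by
      show (X - X.conjTranspose).conjTranspose = -(X - X.conjTranspose)
      rw [Matrix.conjTranspose_sub, Matrix.conjTranspose_conjTranspose, neg_sub])
  · exact Submodule.smul_mem _ _ (by
      show (X + X.conjTranspose).conjTranspose = X + X.conjTranspose
      rw [Matrix.conjTranspose_add, Matrix.conjTranspose_conjTranspose, add_comm])

lemma skew_inf_herm (n : ℕ) : skewSub n ⊓ hermSub n = ⊥ := by
  rw [eq_bot_iff]
  rintro X ⟨h1, h2⟩
  have h1' : X.conjTranspose = -X := h1
  have h2' : X.conjTranspose = X := h2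
  have : X = -X := h2'.symm.trans h1'
  have hX : X = 0 := by
    have h3 : (2 : ℝ) • X = 0 := by rw [two_smul]; nth_rewrite 2 [this]; simp
    simpa using smul_eq_zero.mp h3
  simp [hX]

lemma finrank_matrix_complex (n : ℕ) :
    finrank ℝ (Matrix (Fin n) (Fin n) ℂ) = n * n * 2 := by
  rw [Module.finrank_matrix]
  simp [Complex.finrank_real_complex]

lemma finrank_skewSub (n : ℕ) : finrank ℝ (skewSub n) = n * n := by
  have h1 := Submodule.finrank_sup_add_finrank_inf_eq (skewSub n) (hermSub n)
  rw [skew_sup_herm, skew_inf_herm, finrank_top, finrank_bot, finrank_matrix_complex] at h1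
  have h2 : finrank ℝ (hermSub n) = finrank ℝ (skewSub n) := by
    rw [← map_mulI_skew n, LinearEquiv.finrank_map_eq]
  omega


/-- The `Fin n`-indexed position of an element of `I`. -/
def posIdx (hIsub : I ⊆ Finset.Icc 1 n ×ˢ Finset.Icc 1 n) (q : {p : ℕ × ℕ // p ∈ I}) :
    Fin n × Fin n :=
  ⟨⟨q.1.1 - 1, by
      have h := Finset.mem_product.mp (hIsub q.2)
      have h1 := Finset.mem_Icc.mp h.1
      omega⟩,
   ⟨q.1.2 - 1, by
      have h := Finset.mem_product.mp (hIsub q.2)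
      have h2 := Finset.mem_Icc.mp h.2
      omega⟩⟩

lemma posIdx_fst (hIsub : I ⊆ Finset.Icc 1 n ×ˢ Finset.Icc 1 n) (q : {p : ℕ × ℕ // p ∈ I}) :
    ((posIdx hIsub q).1 : ℕ) + 1 = q.1.1 := by
  have h := Finset.mem_product.mp (hIsub q.2)
  have h1 := Finset.mem_Icc.mp h.1
  show q.1.1 - 1 + 1 = q.1.1
  omega

lemma posIdx_snd (hIsub : I ⊆ Finset.Icc 1 n ×ˢ Finset.Icc 1 n) (q : {p : ℕ × ℕ // p ∈ I}) :
    ((posIdx hIsub q).2 : ℕ) + 1 = q.1.2 := by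
  have h := Finset.mem_product.mp (hIsub q.2)
  have h2 := Finset.mem_Icc.mp h.2
  show q.1.2 - 1 + 1 = q.1.2
  omega

lemma posIdx_pair (hIsub : I ⊆ Finset.Icc 1 n ×ˢ Finset.Icc 1 n) (q : {p : ℕ × ℕ // p ∈ I}) :
    (((posIdx hIsub q).1 : ℕ) + 1, ((posIdx hIsub q).2 : ℕ) + 1) = q.1 := by
  rw [posIdx_fst, posIdx_snd]

lemma vanishesOn_iff (hIsub : I ⊆ Finset.Icc 1 n ×ˢ Finset.Icc 1 n)
    (C : Matrix (Fin n) (Fin n) ℂ) :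
    VanishesOn n I C ↔ ∀ q : {p : ℕ × ℕ // p ∈ I},
      C (posIdx hIsub q).1 (posIdx hIsub q).2 = 0 := by
  constructor
  · intro h q
    apply h
    rw [show (((posIdx hIsub q).1 : ℕ) + 1, ((posIdx hIsub q).2 : ℕ) + 1) = q.1 from
      posIdx_pair hIsub q]
    exact q.2
  · intro h i j hij
    have := h ⟨((i : ℕ) + 1, (j : ℕ) + 1), hij⟩
    have hfst : (posIdx hIsub ⟨((i : ℕ) + 1, (j : ℕ) + 1), hij⟩).1 = i := by
      apply Fin.ext
      have := posIdx_fst hIsub ⟨((i : ℕ) + 1, (j : ℕ) + 1), hij⟩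
      simpa using this
    have hsnd : (posIdx hIsub ⟨((i : ℕ) + 1, (j : ℕ) + 1), hij⟩).2 = j := by
      apply Fin.ext
      have := posIdx_snd hIsub ⟨((i : ℕ) + 1, (j : ℕ) + 1), hij⟩
      simpa using this
    rwa [hfst, hsnd] at this

/-- Matrix supported on the positions of `I` with prescribed entries. -/
noncomputable def embedVec (hIsub : I ⊆ Finset.Icc 1 n ×ˢ Finset.Icc 1 n)
    (v : {p : ℕ × ℕ // p ∈ I} → ℂ) : Matrix (Fin n) (Fin n) ℂ :=
  Matrix.of fun i j => if h : ((i : ℕ) + 1, (j : ℕ) + 1) ∈ I then v ⟨_, h⟩ else 0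

lemma embedVec_posIdx (hIsub : I ⊆ Finset.Icc 1 n ×ˢ Finset.Icc 1 n)
    (v : {p : ℕ × ℕ // p ∈ I} → ℂ) (q : {p : ℕ × ℕ // p ∈ I}) :
    embedVec hIsub v (posIdx hIsub q).1 (posIdx hIsub q).2 = v q := by
  show (if h : (((posIdx hIsub q).1 : ℕ) + 1, ((posIdx hIsub q).2 : ℕ) + 1) ∈ I
      then v ⟨_, h⟩ else 0) = v q
  have hp := posIdx_pair hIsub q
  simp only [hp]
  rw [dif_pos q.2]

lemma embedVec_trace (hIsub : I ⊆ Finset.Icc 1 n ×ˢ Finset.Icc 1 n)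
    (hIstrict : ∀ p ∈ I, p.1 ≠ p.2) (v : {p : ℕ × ℕ // p ∈ I} → ℂ) :
    (embedVec hIsub v).trace = 0 := by
  have h : ∀ i : Fin n, embedVec hIsub v i i = 0 := fun i =>
    dif_neg (fun h => hIstrict _ h rfl)
  simp [Matrix.trace, Matrix.diag, h]

/-- Diagonal matrices, inside the skew-hermitians. -/
noncomputable def diagSub (n : ℕ) : Submodule ℝ (skewSub n) where
  carrier := {X | Matrix.IsDiag (X : Matrix (Fin n) (Fin n) ℂ)}
  add_mem' := by
    intro a b ha hb
    exact Matrix.IsDiag.add ha hb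
  zero_mem' := by
    show Matrix.IsDiag (0 : Matrix (Fin n) (Fin n) ℂ)
    exact Matrix.isDiag_zero
  smul_mem' := by
    intro r X hX
    exact Matrix.IsDiag.smul r hX

/-- The real-diagonal embedding into the diagonal skew-hermitians. -/
noncomputable def diagMap (n : ℕ) : (Fin n → ℝ) →ₗ[ℝ] Matrix (Fin n) (Fin n) ℂ where
  toFun := fun x => Matrix.diagonal (fun i => (x i : ℂ) * Complex.I)
  map_add' := by
    intro x y
    show Matrix.diagonal _ = Matrix.diagonal _ + Matrix.diagonal _
    have h : (fun i => (((x + y) i : ℝ) : ℂ) * Complex.I)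
        = (fun i => ((x i : ℝ) : ℂ) * Complex.I) + (fun i => ((y i : ℝ) : ℂ) * Complex.I) := by
      funext i
      simp only [Pi.add_apply]
      push_cast
      ring
    rw [h, Matrix.diagonal_add]
    rfl
  map_smul' := by
    intro r x
    show Matrix.diagonal _ = r • Matrix.diagonal _
    have h : (fun i => (((r • x) i : ℝ) : ℂ) * Complex.I)
        = r • (fun i => ((x i : ℝ) : ℂ) * Complex.I) := by
      funext i
      simp only [Pi.smul_apply, Complex.real_smul, smul_eq_mul]
      push_cast
      ring
    rw [h, Matrix.diagonal_smul]

lemma diagMap_mem_skew (n : ℕ) (x : Fin n → ℝ) : diagMap n x ∈ skewSub n := by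
  show (Matrix.diagonal fun i => (x i : ℂ) * Complex.I).conjTranspose
      = -(Matrix.diagonal fun i => (x i : ℂ) * Complex.I)
  rw [Matrix.diagonal_conjTranspose]
  have h : (star fun i => ((x i : ℝ) : ℂ) * Complex.I)
      = -fun i => ((x i : ℝ) : ℂ) * Complex.I := by
    funext i
    simp [Complex.ext_iff]
  rw [h, Matrix.diagonal_neg]
  rfl

lemma diagMap_injective (n : ℕ) : Function.Injective (diagMap n) := by
  intro x y h
  funext i
  have := congrFun (congrFun (congrArg (fun M => (M : Matrix (Fin n) (Fin n) ℂ)) h) i) i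
  simp only [diagMap, LinearMap.coe_mk, AddHom.coe_mk, Matrix.diagonal_apply_eq] at this
  have h2 := mul_right_cancel₀ Complex.I_ne_zero this
  exact_mod_cast h2

lemma n_le_finrank_diagSub (n : ℕ) : n ≤ finrank ℝ (diagSub n) := by
  have hmem : ∀ x : Fin n → ℝ,
      (diagMap n).codRestrict (skewSub n) (diagMap_mem_skew n) x ∈ diagSub n := by
    intro x
    show Matrix.IsDiag (Matrix.diagonal fun i => (x i : ℂ) * Complex.I)
    exact Matrix.isDiag_diagonal _
  have hinj : Function.Injective
      (((diagMap n).codRestrict (skewSub n) (diagMap_mem_skew n)).codRestrict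
        (diagSub n) hmem) := by
    intro x y h
    apply diagMap_injective n
    have : ((diagMap n).codRestrict (skewSub n) (diagMap_mem_skew n) x : Matrix (Fin n) (Fin n) ℂ)
        = ((diagMap n).codRestrict (skewSub n) (diagMap_mem_skew n) y :
            Matrix (Fin n) (Fin n) ℂ) := by
      exact congrArg (fun z => ((z : skewSub n) : Matrix (Fin n) (Fin n) ℂ))
        (congrArg Subtype.val h)
    exact this
  calc n = finrank ℝ (Fin n → ℝ) := by rw [Module.finrank_pi]; simp
    _ ≤ finrank ℝ (diagSub n) := LinearMap.finrank_le_finrank_of_injective hinj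


lemma skew_comm_isDiag {n : ℕ} {I : Finset (ℕ × ℕ)}
    (hIsub : I ⊆ Finset.Icc 1 n ×ˢ Finset.Icc 1 n)
    (hIstrict : ∀ p ∈ I, p.1 ≠ p.2)
    (hIcard : I.card = n * (n - 1) / 2)
    (B : Matrix (Fin n) (Fin n) ℂ) (hBvan : VanishesOn n I B)
    (hsurj : ∀ Y : Matrix (Fin n) (Fin n) ℂ, Y.trace = 0 →
      ∃ Z X : Matrix (Fin n) (Fin n) ℂ,
        (Z.trace = 0 ∧ VanishesOn n I Z) ∧ X.conjTranspose = -X ∧ Y = Z + (X * B - B * X))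
    (X : Matrix (Fin n) (Fin n) ℂ) (hX : X.conjTranspose = -X) (hcomm : X * B = B * X) :
    X.IsDiag := by
  classical
  rcases Nat.eq_zero_or_pos n with hn | hn
  · subst hn; intro i; exact i.elim0
  -- the ℝ-linear map extracting the entries of X*B - B*X at the positions of I
  let G : Matrix (Fin n) (Fin n) ℂ →ₗ[ℝ] ({p : ℕ × ℕ // p ∈ I} → ℂ) :=
    { toFun := fun C q => (C * B - B * C) (posIdx hIsub q).1 (posIdx hIsub q).2
      map_add' := by
        intro C D
        funext q
        simp [Matrix.add_mul, Matrix.mul_add, Matrix.sub_apply, Matrix.add_apply]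
        ring
      map_smul' := by
        intro r C
        funext q
        simp [Matrix.smul_mul, Matrix.mul_smul, Matrix.sub_apply, Matrix.smul_apply, smul_sub] }
  let F : skewSub n →ₗ[ℝ] ({p : ℕ × ℕ // p ∈ I} → ℂ) := G.domRestrict (skewSub n)
  -- surjectivity from genericity
  have hFsurj : Function.Surjective F := by
    intro v
    obtain ⟨Z, X0, ⟨hZtr, hZvan⟩, hX0, hYeq⟩ := hsurj (embedVec hIsub v)
      (embedVec_trace hIsub hIstrict v)
    refine ⟨⟨X0, hX0⟩, ?_⟩
    funext q
    have h1 : X0 * B - B * X0 = embedVec hIsub v - Z := by rw [hYeq]; abel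
    show (X0 * B - B * X0) (posIdx hIsub q).1 (posIdx hIsub q).2 = v q
    rw [h1, Matrix.sub_apply, (vanishesOn_iff hIsub Z).mp hZvan q, sub_zero,
      embedVec_posIdx hIsub v q]
  -- the diagonal skew matrices lie in the kernel
  have hDker : diagSub n ≤ LinearMap.ker F := by
    rintro ⟨X0, hX0⟩ hdiag
    have hd : Matrix.IsDiag X0 := hdiag
    rw [LinearMap.mem_ker]
    funext q
    show (X0 * B - B * X0) (posIdx hIsub q).1 (posIdx hIsub q).2 = 0
    set a := (posIdx hIsub q).1
    set b := (posIdx hIsub q).2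
    have hB0 : B a b = 0 := (vanishesOn_iff hIsub B).mp hBvan q
    rw [Matrix.sub_apply, Matrix.mul_apply, Matrix.mul_apply]
    rw [Finset.sum_eq_single a, Finset.sum_eq_single b]
    · rw [hB0]; ring
    · intro k _ hk
      first
        | (rw [hd hk]; ring)
        | (rw [hd hk.symm]; ring)
    · intro h; exact absurd (Finset.mem_univ b) h
    · intro k _ hk
      first
        | (rw [hd hk]; ring)
        | (rw [hd hk.symm]; ring)
    · intro h; exact absurd (Finset.mem_univ a) h
  -- counting
  have hrank := LinearMap.finrank_range_add_finrank_ker F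
  rw [LinearMap.range_eq_top.mpr hFsurj] at hrank
  have htop : finrank ℝ (⊤ : Submodule ℝ ({p : ℕ × ℕ // p ∈ I} → ℂ))
      = finrank ℝ ({p : ℕ × ℕ // p ∈ I} → ℂ) := finrank_top ℝ _
  have hpi : finrank ℝ ({p : ℕ × ℕ // p ∈ I} → ℂ) = I.card * 2 := by
    rw [Module.finrank_pi_fintype]
    simp [Complex.finrank_real_complex, Fintype.card_coe, Finset.sum_const, smul_eq_mul]
  have hcard2 : I.card * 2 = n * (n - 1) := by
    rw [hIcard]
    have heven : 2 ∣ n * (n - 1) := by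
      rcases Nat.even_or_odd n with h | h
      · exact Dvd.dvd.mul_right h.two_dvd _
      · have h2 : Even (n - 1) := by
          rcases h with ⟨k, hk⟩
          exact ⟨k, by omega⟩
        exact Dvd.dvd.mul_left h2.two_dvd _
    omega
  have hnn : n * (n - 1) + n = n * n := by
    obtain ⟨m, rfl⟩ : ∃ m, n = m + 1 := ⟨n - 1, by omega⟩
    simp only [Nat.add_sub_cancel]
    ring
  rw [htop, hpi, hcard2, finrank_skewSub] at hrank
  have hkerD : finrank ℝ (LinearMap.ker F) ≤ finrank ℝ (diagSub n) := by
    have h1 := n_le_finrank_diagSub n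
    omega
  have hDeq : diagSub n = LinearMap.ker F :=
    Submodule.eq_of_le_of_finrank_le hDker hkerD
  -- conclude
  have hXker : (⟨X, hX⟩ : skewSub n) ∈ LinearMap.ker F := by
    rw [LinearMap.mem_ker]
    funext q
    show (X * B - B * X) (posIdx hIsub q).1 (posIdx hIsub q).2 = 0
    rw [hcomm, sub_self, Matrix.zero_apply]
  rw [← hDeq] at hXker
  exact hXker

lemma unitary_comm_isDiag {n : ℕ} {I : Finset (ℕ × ℕ)}
    (hIsub : I ⊆ Finset.Icc 1 n ×ˢ Finset.Icc 1 n)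
    (hIstrict : ∀ p ∈ I, p.1 ≠ p.2)
    (hIcard : I.card = n * (n - 1) / 2)
    (B : Matrix (Fin n) (Fin n) ℂ) (hBvan : VanishesOn n I B)
    (hsurj : ∀ Y : Matrix (Fin n) (Fin n) ℂ, Y.trace = 0 →
      ∃ Z X : Matrix (Fin n) (Fin n) ℂ,
        (Z.trace = 0 ∧ VanishesOn n I Z) ∧ X.conjTranspose = -X ∧ Y = Z + (X * B - B * X))
    (u : Matrix (Fin n) (Fin n) ℂ) (hu : u ∈ Matrix.unitaryGroup (Fin n) ℂ)
    (hcomm : u * B = B * u) : u.IsDiag := by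
  obtain ⟨hu1, hu2⟩ := Unitary.mem_iff.mp hu
  have hstar_comm : star u * B = B * star u := by
    calc star u * B = star u * B * (u * star u) := by rw [hu2, mul_one]
      _ = star u * (B * u) * star u := by noncomm_ring
      _ = star u * (u * B) * star u := by rw [hcomm]
      _ = (star u * u) * (B * star u) := by noncomm_ring
      _ = B * star u := by rw [hu1, one_mul]
  have hs1 : (u - star u).conjTranspose = -(u - star u) := by
    rw [← Matrix.star_eq_conjTranspose]
    simp
  have hs1c : (u - star u) * B = B * (u - star u) := by
    rw [sub_mul, mul_sub, hcomm, hstar_comm]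
  have hd1 : (u - star u).IsDiag :=
    skew_comm_isDiag hIsub hIstrict hIcard B hBvan hsurj _ hs1 hs1c
  have hs2 : (Complex.I • (u + star u)).conjTranspose = -(Complex.I • (u + star u)) := by
    rw [← Matrix.star_eq_conjTranspose]
    simp only [star_smul, star_add, star_star, Complex.star_def, Complex.conj_I, neg_smul]
    rw [add_comm]
  have hs2c : (Complex.I • (u + star u)) * B = B * (Complex.I • (u + star u)) := by
    rw [Matrix.smul_mul, Matrix.mul_smul, add_mul, mul_add, hcomm, hstar_comm]
  have hd2 : (Complex.I • (u + star u)).IsDiag :=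
    skew_comm_isDiag hIsub hIstrict hIcard B hBvan hsurj _ hs2 hs2c
  have hd3 : (u + star u).IsDiag := by
    have h := hd2.smul (-Complex.I)
    rw [smul_smul] at h
    simpa [Complex.I_mul_I] using h
  have hu_eq : u = (2⁻¹ : ℂ) • ((u + star u) + (u - star u)) := by
    have h : (u + star u) + (u - star u) = (2 : ℂ) • u := by
      rw [two_smul]
      abel
    rw [h, smul_smul]
    norm_num
  rw [hu_eq]
  exact Matrix.IsDiag.smul _ (hd3.add hd1)


lemma isDiag_mul {n : ℕ} {A B : Matrix (Fin n) (Fin n) ℂ} (hA : A.IsDiag) (hB : B.IsDiag) :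
    (A * B).IsDiag := by
  intro i j hij
  rw [Matrix.mul_apply]
  apply Finset.sum_eq_zero
  intro k _
  rcases eq_or_ne i k with rfl | hik
  · rw [hB hij]; ring
  · rw [hA hik]; ring

lemma part3 {n : ℕ} {I : Finset (ℕ × ℕ)}
    (hIsub : I ⊆ Finset.Icc 1 n ×ˢ Finset.Icc 1 n)
    (hIstrict : ∀ p ∈ I, p.1 ≠ p.2)
    (hIcard : I.card = n * (n - 1) / 2)
    (A : Matrix (Fin n) (Fin n) ℂ)
    (hgen : ∀ B : Matrix (Fin n) (Fin n) ℂ,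
      (∃ U ∈ Matrix.unitaryGroup (Fin n) ℂ, B = U * A * star U) →
      VanishesOn n I B →
      ∀ Y : Matrix (Fin n) (Fin n) ℂ, Y.trace = 0 →
        ∃ Z X : Matrix (Fin n) (Fin n) ℂ,
          (Z.trace = 0 ∧ VanishesOn n I Z) ∧ X.conjTranspose = -X ∧ Y = Z + (X * B - B * X))
    (g₁ g₂ t : Matrix (Fin n) (Fin n) ℂ)
    (h1 : g₁ ∈ Matrix.unitaryGroup (Fin n) ℂ) (h2 : g₂ ∈ Matrix.unitaryGroup (Fin n) ℂ)
    (ht : IsDiagUnitary n t)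
    (hv1 : VanishesOn n I (star g₁ * A * g₁)) (hv2 : VanishesOn n I (star g₂ * A * g₂))
    (heq : star g₁ * A * g₁ = star t * (star g₂ * A * g₂) * t) :
    IsDiagUnitary n (star g₁ * g₂ * t) := by
  obtain ⟨h11, h12⟩ := Unitary.mem_iff.mp h1
  obtain ⟨h21, h22⟩ := Unitary.mem_iff.mp h2
  obtain ⟨ht1, ht2⟩ := Unitary.mem_iff.mp ht.1
  have hu : star g₁ * g₂ * t ∈ Matrix.unitaryGroup (Fin n) ℂ :=
    mul_mem (mul_mem (Unitary.star_mem h1) h2) ht.1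
  have hBorbit : ∃ U ∈ Matrix.unitaryGroup (Fin n) ℂ,
      star g₁ * A * g₁ = U * A * star U :=
    ⟨star g₁, Unitary.star_mem h1, by rw [star_star]⟩
  have hcommut : (star g₁ * g₂ * t) * (star g₁ * A * g₁)
      = (star g₁ * A * g₁) * (star g₁ * g₂ * t) := by
    have lhs : (star g₁ * g₂ * t) * (star g₁ * A * g₁) = star g₁ * A * (g₂ * t) := by
      rw [heq]
      calc star g₁ * g₂ * t * (star t * (star g₂ * A * g₂) * t)
          = star g₁ * (g₂ * ((t * star t) * (star g₂ * (A * (g₂ * t))))) := by noncomm_ring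
        _ = star g₁ * ((g₂ * star g₂) * (A * (g₂ * t))) := by rw [ht2, one_mul]; noncomm_ring
        _ = star g₁ * A * (g₂ * t) := by rw [h22, one_mul]; noncomm_ring
    have rhs : (star g₁ * A * g₁) * (star g₁ * g₂ * t) = star g₁ * A * (g₂ * t) := by
      calc star g₁ * A * g₁ * (star g₁ * g₂ * t)
          = star g₁ * (A * ((g₁ * star g₁) * (g₂ * t))) := by noncomm_ring
        _ = star g₁ * A * (g₂ * t) := by rw [h12, one_mul]; noncomm_ring
    rw [lhs, rhs]
  exact ⟨hu, unitary_comm_isDiag hIsub hIstrict hIcard (star g₁ * A * g₁) hv1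
    (hgen _ hBorbit hv1) _ hu hcommut⟩

end RFAux

/-- For `I ∈ P'_n` and an `I`-generic `A ∈ L(n)`, the map `g T_n ↦ T_n`-orbit of
`g⁻¹ A g` is a well-defined bijection from `U_A / T_n` onto `X_A / T_n`; in
particular, if `g₁⁻¹ A g₁, g₂⁻¹ A g₂ ∈ L_I(n)` and `g₁⁻¹ A g₁ = t⁻¹ (g₂⁻¹ A g₂) t`
for some `t ∈ T_n`, then `g₁⁻¹ g₂ t ∈ T_n`. -/



theorem reducing_flags_bijection (n : ℕ) (I : Finset (ℕ × ℕ))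
    (hIsub : I ⊆ Finset.Icc 1 n ×ˢ Finset.Icc 1 n)
    (hIstrict : ∀ p ∈ I, p.1 ≠ p.2)
    (hIcard : I.card = n * (n - 1) / 2)
    (A : Matrix (Fin n) (Fin n) ℂ) (hA : A.trace = 0)
    (hgen : ∀ B : Matrix (Fin n) (Fin n) ℂ,
      (∃ U ∈ Matrix.unitaryGroup (Fin n) ℂ, B = U * A * star U) →
      VanishesOn n I B →
      ∀ Y : Matrix (Fin n) (Fin n) ℂ, Y.trace = 0 →
        ∃ Z X : Matrix (Fin n) (Fin n) ℂ,
          (Z.trace = 0 ∧ VanishesOn n I Z) ∧ X.conjTranspose = -X ∧ Y = Z + (X * B - B * X)) :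
    -- The induced map `U_A / T_n → X_A / T_n` is well defined and injective:
    (∀ g₁, g₁ ∈ Matrix.unitaryGroup (Fin n) ℂ → VanishesOn n I (star g₁ * A * g₁) →
      ∀ g₂, g₂ ∈ Matrix.unitaryGroup (Fin n) ℂ → VanishesOn n I (star g₂ * A * g₂) →
        ((∃ t, IsDiagUnitary n t ∧ g₂ = g₁ * t) ↔
          (∃ t, IsDiagUnitary n t ∧
            star g₂ * A * g₂ = star t * (star g₁ * A * g₁) * t))) ∧
    -- and surjective:
    (∀ B : Matrix (Fin n) (Fin n) ℂ,
      (∃ U ∈ Matrix.unitaryGroup (Fin n) ℂ, B = U * A * star U) →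
      VanishesOn n I B →
      ∃ g ∈ Matrix.unitaryGroup (Fin n) ℂ, star g * A * g = B) ∧
    -- In particular:
    (∀ g₁ g₂ t : Matrix (Fin n) (Fin n) ℂ,
      g₁ ∈ Matrix.unitaryGroup (Fin n) ℂ → g₂ ∈ Matrix.unitaryGroup (Fin n) ℂ →
      IsDiagUnitary n t →
      VanishesOn n I (star g₁ * A * g₁) → VanishesOn n I (star g₂ * A * g₂) →
      star g₁ * A * g₁ = star t * (star g₂ * A * g₂) * t →
      IsDiagUnitary n (star g₁ * g₂ * t)) := by
  have hp3 : ∀ g₁ g₂ t : Matrix (Fin n) (Fin n) ℂ,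
      g₁ ∈ Matrix.unitaryGroup (Fin n) ℂ → g₂ ∈ Matrix.unitaryGroup (Fin n) ℂ →
      IsDiagUnitary n t →
      VanishesOn n I (star g₁ * A * g₁) → VanishesOn n I (star g₂ * A * g₂) →
      star g₁ * A * g₁ = star t * (star g₂ * A * g₂) * t →
      IsDiagUnitary n (star g₁ * g₂ * t) :=
    fun g₁ g₂ t h1 h2 ht hv1 hv2 heq =>
      RFAux.part3 hIsub hIstrict hIcard A hgen g₁ g₂ t h1 h2 ht hv1 hv2 heq
  refine ⟨?_, ?_, hp3⟩
  · intro g₁ h1 hv1 g₂ h2 hv2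
    constructor
    · rintro ⟨t, ht, rfl⟩
      refine ⟨t, ht, ?_⟩
      rw [star_mul]
      noncomm_ring
    · rintro ⟨t, ht, heq⟩
      have hd := hp3 g₂ g₁ t h2 h1 ht hv2 hv1 heq
      have hstar_d : star (star g₂ * g₁ * t) = star t * (star g₁ * g₂) := by
        simp [star_mul, mul_assoc]
      obtain ⟨ht1, ht2⟩ := Unitary.mem_iff.mp ht.1
      obtain ⟨h11, h12⟩ := Unitary.mem_iff.mp h1
      refine ⟨t * star (star g₂ * g₁ * t),
        ⟨mul_mem ht.1 (Unitary.star_mem hd.1), ?_⟩, ?_⟩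
      · have hds := hd.2.conjTranspose
        rw [← Matrix.star_eq_conjTranspose] at hds
        exact RFAux.isDiag_mul ht.2 hds
      · rw [hstar_d]
        have key : g₁ * (t * (star t * (star g₁ * g₂))) = g₂ := by
          calc g₁ * (t * (star t * (star g₁ * g₂)))
              = g₁ * ((t * star t) * (star g₁ * g₂)) := by noncomm_ring
            _ = (g₁ * star g₁) * g₂ := by rw [ht2, one_mul]; noncomm_ring
            _ = g₂ := by rw [h12, one_mul]
        exact key.symm
  · rintro B ⟨U, hU, rfl⟩ hv
    exact ⟨star U, Unitary.star_mem hU, by rw [star_star]⟩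
end
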